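/- For each k ≥ 1 there exists a sequence of positive integers x_1 < x_2 < ... < x_k (with x_i + 1 < x_{i+1}) such that whenever nonnegative integers a_1,...,a_k satisfy Σ a_i x_i = 2 Σ x_i, it follows that a_1 = a_2 = ... = a_k = 2. -/
import Mathlib

lemma digits_unique : ∀ (k B : ℕ), 2 < B → ∀ a : Fin k → ℕ, (∀ i, a i < B) →
    (∑ i, a i * B ^ (i : ℕ)) = (∑ i : Fin k, 2 * B ^ (i : ℕ)) → ∀ i, a i = 2 := by
  intro k
  induction k with
  | zero => intro B hB a ha h i; exact i.elim0
  | succ n ih =>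
    intro B hB a ha h i
    rw [Fin.sum_univ_succ, Fin.sum_univ_succ] at h
    have hpow : ∀ j : Fin n, B ^ ((Fin.succ j : Fin (n+1)) : ℕ) = B ^ (j : ℕ) * B := by
      intro j; rw [Fin.val_succ, pow_succ]
    have hL : (∑ j : Fin n, a (Fin.succ j) * B ^ ((Fin.succ j : Fin (n+1)) : ℕ))
        = (∑ j : Fin n, a (Fin.succ j) * B ^ (j : ℕ)) * B := by
      rw [Finset.sum_mul]; apply Finset.sum_congr rfl; intro j _
      rw [hpow j, mul_assoc]
    have hR : (∑ j : Fin n, 2 * B ^ ((Fin.succ j : Fin (n+1)) : ℕ))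
        = (∑ j : Fin n, 2 * B ^ (j : ℕ)) * B := by
      rw [Finset.sum_mul]; apply Finset.sum_congr rfl; intro j _
      rw [hpow j, mul_assoc]
    rw [hL, hR] at h
    simp only [Fin.val_zero, pow_zero, mul_one] at h
    have h0 : a 0 = 2 := by
      have hm := congrArg (· % B) h
      simp only [Nat.add_mul_mod_self_right] at hm
      rw [Nat.mod_eq_of_lt (ha 0), Nat.mod_eq_of_lt hB] at hm
      exact hm
    rw [h0] at h
    have h2 : (∑ j : Fin n, a (Fin.succ j) * B ^ (j : ℕ))
        = (∑ j : Fin n, 2 * B ^ (j : ℕ)) := by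
      have := Nat.add_left_cancel h
      exact Nat.eq_of_mul_eq_mul_right (by omega) this
    have := ih B hB (fun j => a (Fin.succ j)) (fun j => ha _) h2
    rcases Fin.eq_zero_or_eq_succ i with rfl | ⟨j, rfl⟩
    · exact h0
    · exact this j

theorem stmt_10 (k : ℕ) (hk : 1 ≤ k) :
    ∃ x : Fin k → ℕ,
      (∀ i, 0 < x i) ∧
      (∀ (i : ℕ) (h : i + 1 < k), x ⟨i, Nat.lt_of_succ_lt h⟩ + 1 < x ⟨i + 1, h⟩) ∧
      ∀ a : Fin k → ℕ,
        (∑ i, a i * x i) = 2 * ∑ i, x i → ∀ i, a i = 2 := by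
  set B := 2 * k + 1 with hB
  have hB3 : 3 ≤ B := by omega
  set N := B ^ (k + 2) with hN
  refine ⟨fun i => N + B ^ ((i : ℕ) + 1), ?_, ?_, ?_⟩
  · intro i; positivity
  · intro i h
    simp only
    have : B ^ (i + 1 + 1) = B ^ (i + 1) * B := pow_succ B (i + 1)
    have hp : 1 ≤ B ^ (i + 1) := Nat.one_le_pow _ _ (by omega)
    nlinarith
  · intro a hsum i
    set A := ∑ j, a j with hA
    set D := ∑ j : Fin k, B ^ ((j : ℕ) + 1) with hD
    set E := ∑ j, a j * B ^ ((j : ℕ) + 1) with hE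
    have hBk : 1 ≤ B ^ k := Nat.one_le_pow _ _ (by omega)
    -- rewrite hsum
    have heq : A * N + E = 2 * k * N + 2 * D := by
      have lhs : (∑ j, a j * (N + B ^ ((j : ℕ) + 1))) = A * N + E := by
        simp only [mul_add, Finset.sum_add_distrib, hA, hE, Finset.sum_mul]
      have rhs : (2 : ℕ) * ∑ j : Fin k, (N + B ^ ((j : ℕ) + 1)) = 2 * k * N + 2 * D := by
        rw [Finset.sum_add_distrib, Finset.sum_const, Finset.card_univ, Fintype.card_fin,
          smul_eq_mul, mul_add]
        ring
      rw [lhs, rhs] at hsum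
      exact hsum
    -- bounds
    have hDb : D ≤ k * B ^ k := by
      calc D ≤ ∑ _j : Fin k, B ^ k := by
              apply Finset.sum_le_sum
              intro j _
              exact Nat.pow_le_pow_right (by omega) (by omega)
        _ = k * B ^ k := by
              rw [Finset.sum_const, Finset.card_univ, Fintype.card_fin, smul_eq_mul]
    have hDN : 2 * D < N := by
      have : 2 * D ≤ 2 * k * B ^ k := by linarith
      have h2 : 2 * k * B ^ k < B * B ^ k := by
        apply Nat.mul_lt_mul_of_lt_of_le (by omega) le_rfl (by omega)
      have h3 : B * B ^ k ≤ N := by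
        rw [hN, pow_add]
        have : B ≤ B ^ 2 := by nlinarith
        nlinarith
      linarith
    have hEb : E ≤ A * B ^ k := by
      calc E ≤ ∑ j, a j * B ^ k := by
              apply Finset.sum_le_sum
              intro j _
              exact Nat.mul_le_mul_left _ (Nat.pow_le_pow_right (by omega) (by omega))
        _ = A * B ^ k := by rw [hA, Finset.sum_mul]
    -- A ≤ 2k
    have hAub : A ≤ 2 * k := by
      by_contra hc
      push_neg at hc
      have : (2 * k + 1) * N ≤ A * N := Nat.mul_le_mul_right _ (by omega)
      linarith
    -- A = 2k
    have hEN : E < N := by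
      have : A * B ^ k ≤ 2 * k * B ^ k := Nat.mul_le_mul_right _ hAub
      have h2 : 2 * k * B ^ k < B * B ^ k :=
        Nat.mul_lt_mul_of_lt_of_le (by omega) le_rfl (by omega)
      have h3 : B * B ^ k ≤ N := by
        rw [hN, pow_add]
        have : B ≤ B ^ 2 := by nlinarith
        nlinarith
      linarith
    have hAeq : A = 2 * k := by
      by_contra hc
      have hA' : A + 1 ≤ 2 * k := by omega
      have : (A + 1) * N ≤ 2 * k * N := Nat.mul_le_mul_right _ hA'
      nlinarith
    have hED : E = 2 * D := by
      rw [hAeq] at heq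
      omega
    -- digit equation
    have hkey : (∑ j, a j * B ^ (j : ℕ)) = ∑ j : Fin k, 2 * B ^ (j : ℕ) := by
      apply Nat.eq_of_mul_eq_mul_right (show 0 < B by omega)
      calc (∑ j, a j * B ^ (j : ℕ)) * B = E := by
            rw [hE, Finset.sum_mul]
            apply Finset.sum_congr rfl
            intro j _
            rw [pow_succ]; ring
        _ = 2 * D := hED
        _ = (∑ j : Fin k, 2 * B ^ (j : ℕ)) * B := by
            rw [hD, Finset.sum_mul, Finset.mul_sum]
            apply Finset.sum_congr rfl
            intro j _
            rw [pow_succ]; ring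
    have haB : ∀ j, a j < B := by
      intro j
      have : a j ≤ A := Finset.single_le_sum (f := a) (fun _ _ => Nat.zero_le _)
        (Finset.mem_univ j)
      omega
    exact digits_unique k B (by omega) a haB hkey i
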